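/- arXiv:2407.09267 — 2 statements merged into one kernel-verified Lean document; each statement's English description precedes it below -/
import Mathlib

section
/- Let d ≥ 1 and let g_t(x,y) := (4πt)^{-d/2} exp(-|x-y|²/(4t)) denote the Gauss–Weierstrass kernel on ℝ^d. Let u : (0,∞) × ℝ^d × ℝ^d → [0,∞) be measurable, let φ₀ : ℝ^d → [0,∞) be bounded and measurable, and let λ₀ > 0 be such that e^{-λ₀ t} φ₀(x) = ∫_{ℝ^d} u_t(x,y) φ₀(y) dy for all x ∈ ℝ^d and t > 0. Let W : ℝ^d → (0,∞) satisfy W(x) → ∞ as |x| → ∞, and suppose there exist constants c₁, A > 0 and a ≥ 1 such that for all x ≠ 0, all y ∈ ℝ^d and all t > 0, u_t(x,y) ≤ c₁ exp(−( A W(x) t ∧ √(W(x)) |x| )) g_{at}(x,y), where ∧ denotes minimum. Then for every ε > 0 there exist c₂ > 0 and ρ > 0 such that φ₀(x) ≤ c₂ ‖φ₀‖_∞ exp(−(1−ε) √(W(x)) |x|) for all |x| > ρ, where ‖φ₀‖_∞ denotes the supremum norm of φ₀. -/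
open Real Filter MeasureTheory

lemma gauss_integrable (d : ℕ) (s : ℝ) (hs : 0 < s) (x : EuclideanSpace ℝ (Fin d)) :
    Integrable (fun y : EuclideanSpace ℝ (Fin d) => Real.exp (-‖x - y‖ ^ 2 / (4 * s))) := by
  have hb : (0 : ℝ) < 1 / (4 * s) := by positivity
  have h0 : Integrable (fun v : EuclideanSpace ℝ (Fin d) =>
      Real.exp (-(1 / (4 * s)) * ‖v‖ ^ 2)) := by
    have := (GaussianFourier.integrable_cexp_neg_mul_sq_norm_add (V := EuclideanSpace ℝ (Fin d))
      (b := ((1 / (4 * s) : ℝ) : ℂ)) (by simpa using hb) 0 0).norm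
    convert this using 2 with v
    simp [Complex.norm_exp]
    norm_cast
    exact Or.inl rfl
  have h1 : Integrable (fun y : EuclideanSpace ℝ (Fin d) =>
      Real.exp (-(1 / (4 * s)) * ‖x - y‖ ^ 2)) := by
    have := h0.comp_sub_left x
    simpa using this
  convert h1 using 2 with y
  ring_nf

lemma gauss_integral (d : ℕ) (s : ℝ) (hs : 0 < s) (x : EuclideanSpace ℝ (Fin d)) :
    ∫ y : EuclideanSpace ℝ (Fin d), Real.exp (-‖x - y‖ ^ 2 / (4 * s))
      = (4 * π * s) ^ ((d : ℝ) / 2) := by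
  have hb : (0 : ℝ) < 1 / (4 * s) := by positivity
  have h1 : (fun y : EuclideanSpace ℝ (Fin d) => Real.exp (-‖x - y‖ ^ 2 / (4 * s)))
      = fun y => (fun v : EuclideanSpace ℝ (Fin d) =>
        Real.exp (-(1 / (4 * s)) * ‖v‖ ^ 2)) (x - y) := by
    funext y; congr 1; ring
  have h2 := MeasureTheory.integral_sub_left_eq_self
    (fun v : EuclideanSpace ℝ (Fin d) => Real.exp (-(1 / (4 * s)) * ‖v‖ ^ 2))
    (volume : Measure (EuclideanSpace ℝ (Fin d))) x
  rw [h1, h2, GaussianFourier.integral_rexp_neg_mul_sq_norm hb]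
  congr 1
  · rw [div_div_eq_mul_div, div_one, mul_comm]
    ring
  · simp

/-- Proposition 3.1 (abstract form): upper bound for the ground state from a
Gaussian-with-decay upper bound on the semigroup kernel. -/
theorem ground_state_upper_bound (d : ℕ) (hd : 1 ≤ d)
    (u : ℝ → EuclideanSpace ℝ (Fin d) → EuclideanSpace ℝ (Fin d) → ℝ)
    (hu_meas : Measurable fun p : ℝ × EuclideanSpace ℝ (Fin d) × EuclideanSpace ℝ (Fin d) =>
      u p.1 p.2.1 p.2.2)
    (hu_nonneg : ∀ t, 0 < t → ∀ x y, 0 ≤ u t x y)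
    (φ : EuclideanSpace ℝ (Fin d) → ℝ)
    (hφ_meas : Measurable φ) (hφ_nonneg : ∀ x, 0 ≤ φ x)
    (hφ_bdd : ∃ M : ℝ, ∀ x, φ x ≤ M)
    (lam : ℝ) (hlam : 0 < lam)
    (heig : ∀ x, ∀ t, 0 < t → Real.exp (-lam * t) * φ x = ∫ y, u t x y * φ y)
    (W : EuclideanSpace ℝ (Fin d) → ℝ) (hW_pos : ∀ x, 0 < W x)
    (hW : Tendsto W (Bornology.cobounded (EuclideanSpace ℝ (Fin d))) atTop)
    (c₁ A a : ℝ) (hc₁ : 0 < c₁) (hA : 0 < A) (ha : 1 ≤ a)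
    (hker : ∀ t, 0 < t → ∀ x y : EuclideanSpace ℝ (Fin d), x ≠ 0 →
      u t x y ≤ c₁ * Real.exp (-(min (A * W x * t) (Real.sqrt (W x) * ‖x‖))) *
        ((4 * π * (a * t)) ^ (-(d : ℝ) / 2) * Real.exp (-‖x - y‖ ^ 2 / (4 * (a * t))))) :
    ∀ ε : ℝ, 0 < ε → ∃ c₂ : ℝ, 0 < c₂ ∧ ∃ ρ : ℝ, 0 < ρ ∧
      ∀ x : EuclideanSpace ℝ (Fin d), ρ < ‖x‖ →
        φ x ≤ c₂ * (⨆ y : EuclideanSpace ℝ (Fin d), φ y) *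
          Real.exp (-(1 - ε) * Real.sqrt (W x) * ‖x‖) := by
  intro ε hε
  obtain ⟨M₀, hM₀⟩ := hφ_bdd
  have hbdd : BddAbove (Set.range φ) := ⟨M₀, by rintro _ ⟨x, rfl⟩; exact hM₀ x⟩
  set M : ℝ := ⨆ y, φ y with hM
  have hφ_le_M : ∀ x, φ x ≤ M := fun x => le_ciSup hbdd x
  have hM_nonneg : 0 ≤ M := le_trans (hφ_nonneg 0) (hφ_le_M 0)
  -- main pointwise estimate for any t > 0 and x ≠ 0
  have key : ∀ (x : EuclideanSpace ℝ (Fin d)), x ≠ 0 → ∀ t : ℝ, 0 < t →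
      φ x ≤ c₁ * M * Real.exp (lam * t - min (A * W x * t) (Real.sqrt (W x) * ‖x‖)) := by
    intro x hx t ht
    have hat : 0 < a * t := mul_pos (lt_of_lt_of_le one_pos ha) ht
    set C : ℝ := c₁ * Real.exp (-(min (A * W x * t) (Real.sqrt (W x) * ‖x‖))) with hC
    have hC_pos : 0 < C := mul_pos hc₁ (Real.exp_pos _)
    set g : EuclideanSpace ℝ (Fin d) → ℝ :=
      fun y => (4 * π * (a * t)) ^ (-(d : ℝ) / 2) * Real.exp (-‖x - y‖ ^ 2 / (4 * (a * t)))
      with hg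
    have hg_int : Integrable g := by
      exact ((gauss_integrable d (a * t) hat x).const_mul _)
    have hg_integral : ∫ y, g y = 1 := by
      rw [hg]
      rw [integral_const_mul, gauss_integral d (a * t) hat x]
      rw [← Real.rpow_add (by positivity), neg_div, neg_add_cancel, Real.rpow_zero]
    have hpt : ∀ y, u t x y * φ y ≤ C * M * g y := by
      intro y
      have h1 : u t x y ≤ C * g y := hker t ht x y hx
      have h2 : φ y ≤ M := hφ_le_M y
      have hg_nonneg : 0 ≤ g y := by positivity
      calc u t x y * φ y ≤ (C * g y) * M :=
            mul_le_mul h1 h2 (hφ_nonneg y) (le_trans (hu_nonneg t ht x y) h1)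
        _ = C * M * g y := by ring
    have hint_le : ∫ y, u t x y * φ y ≤ ∫ y, C * M * g y := by
      apply integral_mono_of_nonneg
      · exact Filter.Eventually.of_forall fun y =>
          mul_nonneg (hu_nonneg t ht x y) (hφ_nonneg y)
      · exact hg_int.const_mul _
      · exact Filter.Eventually.of_forall hpt
    have hRHS : ∫ y, C * M * g y = C * M := by
      rw [integral_const_mul, hg_integral, mul_one]
    have := heig x t ht
    have hmain : Real.exp (-lam * t) * φ x ≤ C * M := by
      rw [this]; exact hint_le.trans hRHS.le
    have hexp : 0 < Real.exp (-lam * t) := Real.exp_pos _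
    have : φ x ≤ C * M / Real.exp (-lam * t) := by
      rw [le_div_iff₀ hexp]
      linarith [hmain, mul_comm (Real.exp (-lam * t)) (φ x)]
    calc φ x ≤ C * M / Real.exp (-lam * t) := this
      _ = c₁ * M * Real.exp (lam * t - min (A * W x * t) (Real.sqrt (W x) * ‖x‖)) := by
          have e1 : Real.exp (-lam * t) = (Real.exp (lam * t))⁻¹ := by
            rw [← Real.exp_neg]; congr 1; ring
          rw [e1, div_eq_mul_inv, inv_inv, hC, Real.exp_sub, Real.exp_neg]
          ring
  -- choose ρ using hW
  have hev : ∀ᶠ x in Bornology.cobounded (EuclideanSpace ℝ (Fin d)),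
      lam / (A * ε) ≤ W x := hW.eventually (eventually_ge_atTop _)
  rw [← comap_norm_atTop, eventually_comap] at hev
  rw [eventually_atTop] at hev
  obtain ⟨R, hR⟩ := hev
  refine ⟨c₁, hc₁, max R 1, lt_of_lt_of_le one_pos (le_max_right _ _), ?_⟩
  intro x hx
  have hxnorm : 1 < ‖x‖ := lt_of_le_of_lt (le_max_right _ _) hx
  have hx0 : x ≠ 0 := by
    intro h; rw [h] at hxnorm; simp at hxnorm; linarith
  have hWx : lam / (A * ε) ≤ W x :=
    hR ‖x‖ (le_of_lt (lt_of_le_of_lt (le_max_left _ _) hx)) x rfl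
  have hWpos := hW_pos x
  have hsq : 0 < Real.sqrt (W x) := Real.sqrt_pos.mpr hWpos
  -- choose t
  set t : ℝ := ‖x‖ / (A * Real.sqrt (W x)) with htdef
  have hxpos : 0 < ‖x‖ := lt_trans one_pos hxnorm
  have ht : 0 < t := div_pos hxpos (mul_pos hA hsq)
  have hW_eq : Real.sqrt (W x) * Real.sqrt (W x) = W x :=
    Real.mul_self_sqrt (le_of_lt hWpos)
  have ht' : t * (A * Real.sqrt (W x)) = ‖x‖ := div_mul_cancel₀ _ (by positivity)
  have hAWt : A * W x * t = Real.sqrt (W x) * ‖x‖ := by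
    calc A * W x * t = A * (Real.sqrt (W x) * Real.sqrt (W x)) * t := by rw [hW_eq]
      _ = Real.sqrt (W x) * (t * (A * Real.sqrt (W x))) := by ring
      _ = Real.sqrt (W x) * ‖x‖ := by rw [ht']
  have hmin : min (A * W x * t) (Real.sqrt (W x) * ‖x‖) = Real.sqrt (W x) * ‖x‖ := by
    rw [hAWt, min_self]
  have hlamt : lam * t ≤ ε * (Real.sqrt (W x) * ‖x‖) := by
    have h1 : lam ≤ A * ε * W x := by
      rw [div_le_iff₀ (by positivity)] at hWx
      linarith [hWx]
    calc lam * t ≤ (A * ε * W x) * t := mul_le_mul_of_nonneg_right h1 ht.le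
      _ = ε * Real.sqrt (W x) * (t * (A * Real.sqrt (W x))) := by
          nth_rewrite 1 [← hW_eq]; ring
      _ = ε * (Real.sqrt (W x) * ‖x‖) := by rw [ht']; ring
  have hkey := key x hx0 t ht
  rw [hmin] at hkey
  calc φ x ≤ c₁ * M * Real.exp (lam * t - Real.sqrt (W x) * ‖x‖) := hkey
    _ ≤ c₁ * M * Real.exp (-(1 - ε) * Real.sqrt (W x) * ‖x‖) := by
        apply mul_le_mul_of_nonneg_left _ (mul_nonneg (le_of_lt hc₁) hM_nonneg)
        apply Real.exp_le_exp.mpr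
        nlinarith [hlamt]
end

section
/- Let d ≥ 1 and let g_t(x,y) := (4πt)^{-d/2} exp(-|x-y|²/(4t)) denote the Gauss–Weierstrass kernel on ℝ^d. Let a, b > 1 satisfy 1/a + 1/b = 1. Then for all x, y ∈ ℝ^d and all t > 0, ( ∫_{ℝ^d} g_{t/a}(x,z) (g_{t/b}(z,y))^a dz )^{1/a} ≤ a^{d/2} b^{d/(2b)} g_{at}(x,y). -/
set_option maxHeartbeats 1000000

open Real Filter MeasureTheory

lemma complete_square_aux {E : Type*} [NormedAddCommGroup E] [InnerProductSpace ℝ E]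
    (α β : ℝ) (hα : 0 < α) (hβ : 0 < β) (x y z : E) :
    α * ‖x - z‖^2 + β * ‖z - y‖^2 =
      (α+β) * ‖z - ((α/(α+β)) • x + (β/(α+β)) • y)‖^2 + (α*β/(α+β)) * ‖x - y‖^2 := by
  have hs : α + β ≠ 0 := by positivity
  simp only [← real_inner_self_eq_norm_sq, inner_sub_left, inner_sub_right, inner_add_left,
    inner_add_right, real_inner_smul_left, real_inner_smul_right]
  field_simp
  ring

/-- The Gaussian estimate used after Hölder's inequality in Lemma 3.2:
`(∫ g_{t/a}(x,z) g_{t/b}(z,y)^a dz)^{1/a} ≤ a^{d/2} b^{d/(2b)} g_{at}(x,y)`. -/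
theorem gaussian_holder_estimate (d : ℕ) (hd : 1 ≤ d) (a b : ℝ) (ha : 1 < a) (hb : 1 < b)
    (hab : 1 / a + 1 / b = 1) (x y : EuclideanSpace ℝ (Fin d)) (t : ℝ) (ht : 0 < t) :
    (∫ z : EuclideanSpace ℝ (Fin d),
        (4 * π * (t / a)) ^ (-(d : ℝ) / 2) * Real.exp (-‖x - z‖ ^ 2 / (4 * (t / a))) *
          ((4 * π * (t / b)) ^ (-(d : ℝ) / 2) *
            Real.exp (-‖z - y‖ ^ 2 / (4 * (t / b)))) ^ a) ^ (1 / a) ≤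
      a ^ ((d : ℝ) / 2) * b ^ ((d : ℝ) / (2 * b)) *
        ((4 * π * (a * t)) ^ (-(d : ℝ) / 2) * Real.exp (-‖x - y‖ ^ 2 / (4 * (a * t)))) := by
  have hπ : 0 < π := pi_pos
  have ha0 : (0:ℝ) < a := by linarith
  have hb0 : (0:ℝ) < b := by linarith
  have hd0 : (0:ℝ) ≤ (d:ℝ) := Nat.cast_nonneg d
  have hab' : a + b = a * b := by
    field_simp at hab; linarith
  set α : ℝ := a / (4*t) with hα_def
  set β : ℝ := a * b / (4*t) with hβ_def
  have hα : 0 < α := by positivity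
  have hβ : 0 < β := by positivity
  have hs : 0 < α + β := by positivity
  set w : EuclideanSpace ℝ (Fin d) := ((α/(α+β)) • x + (β/(α+β)) • y) with hw_def
  set N : ℝ := ‖x - y‖^2 with hN_def
  have hN : 0 ≤ N := sq_nonneg _
  set C1 : ℝ := (4 * π * (t / a)) ^ (-(d : ℝ) / 2) with hC1_def
  set C2 : ℝ := (4 * π * (t / b)) ^ (-(d : ℝ) / 2) with hC2_def
  have hC1 : 0 < C1 := rpow_pos_of_pos (by positivity) _
  have hC2 : 0 < C2 := rpow_pos_of_pos (by positivity) _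
  -- pointwise rewriting of the integrand
  have key : ∀ z : EuclideanSpace ℝ (Fin d),
      C1 * Real.exp (-‖x - z‖ ^ 2 / (4 * (t / a))) *
        (C2 * Real.exp (-‖z - y‖ ^ 2 / (4 * (t / b)))) ^ a
      = (C1 * C2 ^ a * Real.exp (-(α*β/(α+β)) * N)) * Real.exp (-((α+β) * ‖z - w‖^2)) := by
    intro z
    have hE : -‖x - z‖ ^ 2 / (4 * (t / a)) + (-‖z - y‖ ^ 2 / (4 * (t / b))) * a
        = -((α+β) * ‖z - w‖^2) + -(α*β/(α+β)) * N := by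
      have cs := complete_square_aux α β hα hβ x y z
      have h1 : -‖x - z‖ ^ 2 / (4 * (t / a)) = -(α * ‖x - z‖^2) := by
        rw [hα_def]; field_simp
      have h2 : -‖z - y‖ ^ 2 / (4 * (t / b)) * a = -(β * ‖z - y‖^2) := by
        rw [hβ_def]; field_simp
      rw [← hw_def, ← hN_def] at cs
      rw [h1, h2]
      linarith [cs]
    rw [Real.mul_rpow hC2.le (Real.exp_pos _).le, ← Real.exp_mul]
    have hsplit : C1 * rexp (-‖x - z‖ ^ 2 / (4 * (t / a))) *
        (C2 ^ a * rexp (-‖z - y‖ ^ 2 / (4 * (t / b)) * a))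
        = C1 * C2 ^ a * rexp (-‖x - z‖ ^ 2 / (4 * (t / a)) + -‖z - y‖ ^ 2 / (4 * (t / b)) * a) := by
      rw [Real.exp_add]; ring
    rw [hsplit, hE, Real.exp_add]
    ring
  rw [integral_congr_ae (Filter.Eventually.of_forall key), integral_const_mul]
  have hgauss : (∫ z : EuclideanSpace ℝ (Fin d), Real.exp (-((α+β) * ‖z - w‖^2)))
      = (π/(α+β)) ^ ((d:ℝ)/2) := by
    simp_rw [← neg_mul]
    rw [integral_sub_right_eq_self (fun z : EuclideanSpace ℝ (Fin d) =>
      Real.exp (-(α+β) * ‖z‖^2)) w]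
    rw [GaussianFourier.integral_rexp_neg_mul_sq_norm hs]
    norm_num [finrank_euclideanSpace_fin]
  rw [hgauss]
  set γ : ℝ := α*β/(α+β) with hγ_def
  have one_b : (0:ℝ) < 1 + b := by linarith
  -- exponential bound
  have hγ : 1/(4*t) ≤ γ := by
    have e : γ = a*b/(4*t*(1+b)) := by
      rw [hγ_def, hα_def, hβ_def]; field_simp
    rw [e, div_le_div_iff₀ (by positivity) (by positivity)]
    nlinarith
  have hexp : rexp (-γ*N) ^ (1/a) ≤ rexp (-N/(4*(a*t))) := by
    rw [← Real.exp_mul, Real.exp_le_exp]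
    have h4 : -N/(4*(a*t)) = -(N*(1/(4*t))*(1/a)) := by field_simp
    have h2 : N*(1/(4*t)) ≤ N*γ := mul_le_mul_of_nonneg_left hγ hN
    have h3 := mul_le_mul_of_nonneg_right h2 (by positivity : (0:ℝ) ≤ 1/a)
    rw [h4]; nlinarith [h3]
  -- constant bound
  have hπs : 0 < (π/(α+β)) ^ ((d:ℝ)/2) := Real.rpow_pos_of_pos (by positivity) _
  have hP : 0 < C1 * C2^a * (π/(α+β))^((d:ℝ)/2) := by positivity
  have hD : 0 < a ^ ((d:ℝ)/2) * b ^ ((d:ℝ)/(2*b)) * (4*π*(a*t)) ^ (-(d:ℝ)/2) := by positivity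
  have hαβ : α + β = a*(1+b)/(4*t) := by rw [hα_def, hβ_def]; field_simp
  have hDa : C1 * C2^a * (π/(α+β))^((d:ℝ)/2)
      ≤ (a ^ ((d:ℝ)/2) * b ^ ((d:ℝ)/(2*b)) * (4*π*(a*t)) ^ (-(d:ℝ)/2)) ^ a := by
    rw [← Real.exp_log hP, ← Real.exp_log (Real.rpow_pos_of_pos hD a), Real.exp_le_exp,
      Real.log_rpow hD]
    have lP : Real.log (C1 * C2^a * (π/(α+β))^((d:ℝ)/2))
        = Real.log C1 + a * Real.log C2 + (d:ℝ)/2 * Real.log (π/(α+β)) := by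
      rw [Real.log_mul (by positivity) (by positivity), Real.log_mul hC1.ne' (by positivity),
        Real.log_rpow hC2,
        Real.log_rpow (show (0:ℝ) < π/(α+β) from by positivity) ((d:ℝ)/2)]
    have l1 : Real.log C1
        = -(d:ℝ)/2 * (Real.log 4 + Real.log π + (Real.log t - Real.log a)) := by
      rw [hC1_def, Real.log_rpow (by positivity), Real.log_mul (by positivity) (by positivity),
        Real.log_mul (by positivity) (by positivity), Real.log_div (by positivity) (by positivity)]
    have l2 : Real.log C2
        = -(d:ℝ)/2 * (Real.log 4 + Real.log π + (Real.log t - Real.log b)) := by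
      rw [hC2_def, Real.log_rpow (by positivity), Real.log_mul (by positivity) (by positivity),
        Real.log_mul (by positivity) (by positivity), Real.log_div (by positivity) (by positivity)]
    have l3 : Real.log (π/(α+β))
        = Real.log π - (Real.log a + Real.log (1+b) - (Real.log 4 + Real.log t)) := by
      rw [hαβ, Real.log_div (by positivity) (by positivity),
        Real.log_div (by positivity) (by positivity),
        Real.log_mul (by positivity) (by positivity),
        Real.log_mul (by positivity) (by positivity)]
    have l4 : Real.log (a ^ ((d:ℝ)/2) * b ^ ((d:ℝ)/(2*b)) * (4*π*(a*t)) ^ (-(d:ℝ)/2))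
        = (d:ℝ)/2 * Real.log a + (d:ℝ)/(2*b) * Real.log b
          + (-(d:ℝ)/2) * (Real.log 4 + Real.log π + (Real.log a + Real.log t)) := by
      rw [Real.log_mul (by positivity) (by positivity),
        Real.log_mul (by positivity) (by positivity),
        Real.log_rpow ha0, Real.log_rpow hb0,
        Real.log_rpow (show (0:ℝ) < 4*π*(a*t) from by positivity) (-(d:ℝ)/2),
        Real.log_mul (by positivity) (by positivity),
        Real.log_mul (by positivity) (by positivity),
        Real.log_mul (by positivity) (by positivity)]
    rw [lP, l1, l2, l3, l4]
    have hlog : Real.log b ≤ Real.log (1+b) := Real.log_le_log hb0 (by linarith)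
    have hineq : 0 ≤ (d:ℝ)/2 * (Real.log (1+b) - Real.log b) := by
      apply mul_nonneg (by positivity); linarith
    have hterm : a * ((d:ℝ)/(2*b) * Real.log b) = (a-1) * ((d:ℝ)/2 * Real.log b) := by
      have hfrac : a / b = a - 1 := by
        field_simp
        linarith
      calc a * ((d:ℝ)/(2*b) * Real.log b) = (a/b) * ((d:ℝ)/2 * Real.log b) := by ring
        _ = (a-1) * ((d:ℝ)/2 * Real.log b) := by rw [hfrac]
    nlinarith [hterm, hineq]
  have hconst : (C1 * C2^a * (π/(α+β))^((d:ℝ)/2)) ^ (1/a)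
      ≤ a ^ ((d:ℝ)/2) * b ^ ((d:ℝ)/(2*b)) * (4*π*(a*t)) ^ (-(d:ℝ)/2) := by
    calc (C1 * C2^a * (π/(α+β))^((d:ℝ)/2)) ^ (1/a)
        ≤ ((a ^ ((d:ℝ)/2) * b ^ ((d:ℝ)/(2*b)) * (4*π*(a*t)) ^ (-(d:ℝ)/2)) ^ a) ^ (1/a) :=
          Real.rpow_le_rpow hP.le hDa (by positivity)
      _ = a ^ ((d:ℝ)/2) * b ^ ((d:ℝ)/(2*b)) * (4*π*(a*t)) ^ (-(d:ℝ)/2) := by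
          rw [← Real.rpow_mul hD.le, mul_one_div, div_self ha0.ne', Real.rpow_one]
  -- combine
  have lhs_eq : C1 * C2 ^ a * rexp (-γ * N) * (π / (α + β)) ^ ((d:ℝ) / 2)
      = (C1 * C2^a * (π/(α+β))^((d:ℝ)/2)) * rexp (-γ*N) := by ring
  rw [lhs_eq, Real.mul_rpow hP.le (Real.exp_pos _).le]
  calc (C1 * C2^a * (π/(α+β))^((d:ℝ)/2)) ^ (1/a) * rexp (-γ*N) ^ (1/a)
      ≤ (a ^ ((d:ℝ)/2) * b ^ ((d:ℝ)/(2*b)) * (4*π*(a*t)) ^ (-(d:ℝ)/2)) * rexp (-N/(4*(a*t))) :=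
        mul_le_mul hconst hexp (by positivity) hD.le
    _ = a ^ ((d:ℝ) / 2) * b ^ ((d:ℝ) / (2 * b)) *
        ((4 * π * (a * t)) ^ (-(d:ℝ) / 2) * rexp (-N / (4 * (a * t)))) := by ring
end
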